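/- Let λ : J → ℤ_{≥0} be finitely supported. A finite-dimensional Ŷ_{r,n}^K-module M satisfies J_λ·M = 0 (i.e. M is a Y_{r,n}^{λ,K}-module) if and only if, for every μ ∈ C_r(n), the Ĥ_{μ_1}^K⊗⋯⊗Ĥ_{μ_r}^K-module Hom_{KT}(V(μ), I_μM) is annihilated by the corresponding cyclotomic relations, i.e. is a module over H_{μ_1}^{λ,K}⊗⋯⊗H_{μ_r}^{λ,K}. Consequently, the equivalence F : N ↦ ⊕_{μ∈C_r(n)} Hom_{KT}(V(μ), I_μN) restricts to an equivalence between the category of finite-dimensional Y_{r,n}^{λ,K}-modules and the category of finite-dimensional modules over H_{r,n}^{λ,K} := ⊕_{μ∈C_r(n)} H_{μ_1}^{λ,K}⊗⋯⊗H_{μ_r}^{λ,K}. -/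

import Mathlib

/- Common setup: the affine Yokonuma-Hecke algebra presented by generators and
relations, reduced words, Bruhat order, affine Hecke algebras (of tensor-product
type), isotypic components and induced modules. -/

set_option maxHeartbeats 1000000

open scoped TensorProduct

noncomputable section

namespace YH

/-- Generators of the affine Yokonuma-Hecke algebra: `t j` for `j : Fin n`,
`g i` (for `i` with `i+1 < n`, representing the transposition `(i, i+1)` in
0-based indexing), and `X1`, `X1inv` (the generator `X_1` and its inverse). -/
inductive YGen (n : ℕ) : Type
  | t (j : Fin n) : YGen n
  | g (i : ℕ) (h : i + 1 < n) : YGen n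
  | X1 : YGen n
  | X1inv : YGen n

variable (K : Type) [Field K] (r n : ℕ) (q : K)

/-- The free algebra on the generators. -/
abbrev FY := FreeAlgebra K (YGen n)

def tF (j : Fin n) : FY K n := FreeAlgebra.ι K (YGen.t j)
def gF (i : ℕ) (h : i + 1 < n) : FY K n := FreeAlgebra.ι K (YGen.g i h)
def X1F : FY K n := FreeAlgebra.ι K YGen.X1
def X1invF : FY K n := FreeAlgebra.ι K YGen.X1inv

/-- The idempotent `e_i = (1/r) ∑_{s=0}^{r-1} t_i^s t_{i+1}^{-s}` (as an element
of the free algebra, with `t_{i+1}^{-s}` written as `t_{i+1}^{(r-s) % r}`,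
using `t^r = 1`). -/
def eF (i : ℕ) (h : i + 1 < n) : FY K n :=
  (r : K)⁻¹ • ∑ s ∈ Finset.range r,
    tF K n ⟨i, by omega⟩ ^ s * tF K n ⟨i + 1, h⟩ ^ ((r - s) % r)

/-- The simple transposition `s_i = (i, i+1)` of `Fin n` (0-based). -/
def swapi (i : ℕ) (h : i + 1 < n) : Equiv.Perm (Fin n) :=
  Equiv.swap ⟨i, by omega⟩ ⟨i + 1, h⟩

/-- Defining relations of the affine Yokonuma-Hecke algebra `Ŷ_{r,n}(q)` over `K`. -/
inductive YRel : FY K n → FY K n → Prop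
  | gg {i j : ℕ} (hi : i + 1 < n) (hj : j + 1 < n) (hij : i + 2 ≤ j ∨ j + 2 ≤ i) :
      YRel (gF K n i hi * gF K n j hj) (gF K n j hj * gF K n i hi)
  | braid {i : ℕ} (h : i + 2 < n) :
      YRel (gF K n i (by omega) * gF K n (i + 1) h * gF K n i (by omega))
        (gF K n (i + 1) h * gF K n i (by omega) * gF K n (i + 1) h)
  | tt (i j : Fin n) : YRel (tF K n i * tF K n j) (tF K n j * tF K n i)
  | gt {i : ℕ} (hi : i + 1 < n) (j : Fin n) :
      YRel (gF K n i hi * tF K n j) (tF K n (swapi n i hi j) * gF K n i hi)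
  | tr (j : Fin n) : YRel (tF K n j ^ r) 1
  | gsq {i : ℕ} (hi : i + 1 < n) :
      YRel (gF K n i hi * gF K n i hi)
        (1 + (q - q⁻¹) • (eF K r n i hi * gF K n i hi))
  | XXinv : YRel (X1F K n * X1invF K n) 1
  | XinvX : YRel (X1invF K n * X1F K n) 1
  | gXgX (h : 1 < n) :
      YRel (gF K n 0 (by omega) * X1F K n * gF K n 0 (by omega) * X1F K n)
        (X1F K n * gF K n 0 (by omega) * X1F K n * gF K n 0 (by omega))
  | gX {i : ℕ} (hi : i + 1 < n) (h1 : 1 ≤ i) :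
      YRel (gF K n i hi * X1F K n) (X1F K n * gF K n i hi)
  | tX (j : Fin n) : YRel (tF K n j * X1F K n) (X1F K n * tF K n j)

/-- The affine Yokonuma-Hecke algebra `Ŷ_{r,n}^K`. -/
abbrev Y := RingQuot (YRel K r n q)

def mkY : FY K n →ₐ[K] Y K r n q := RingQuot.mkAlgHom K (YRel K r n q)

/-- The generator `t_j` (0-based `j`). -/
def t (j : Fin n) : Y K r n q := mkY K r n q (tF K n j)
/-- The generator `g_i` (0-based `i`, `i+1 < n`). -/
def g (i : ℕ) (h : i + 1 < n) : Y K r n q := mkY K r n q (gF K n i h)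
/-- The idempotent `e_i`. -/
def e (i : ℕ) (h : i + 1 < n) : Y K r n q := mkY K r n q (eF K r n i h)
def X1 : Y K r n q := mkY K r n q (X1F K n)
def X1inv : Y K r n q := mkY K r n q (X1invF K n)

/-- `X_{i+1} := g_i X_i g_i`, recursively. -/
def Xrec : (k : ℕ) → k < n → Y K r n q
  | 0, _ => X1 K r n q
  | k + 1, h => g K r n q k (by omega) * Xrec k (by omega) * g K r n q k (by omega)

/-- The commuting elements `X_j` (0-based `j`). -/
def X (j : Fin n) : Y K r n q := Xrec K r n q j.1 j.2

/-! ### Words and reduced expressions -/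

/-- A word in the simple transpositions. -/
abbrev Word := List {i : ℕ // i + 1 < n}

/-- The permutation represented by a word. -/
def permOfWord (l : Word n) : Equiv.Perm (Fin n) :=
  (l.map fun i => swapi n i.1 i.2).prod

/-- `l` is a reduced word for `w`. -/
def IsReducedWord (l : Word n) (w : Equiv.Perm (Fin n)) : Prop :=
  permOfWord n l = w ∧ ∀ l' : Word n, permOfWord n l' = w → l.length ≤ l'.length

/-- The product `g_{i_1} ⋯ g_{i_k}` along a word. -/
def gword (l : Word n) : Y K r n q := (l.map fun i => g K r n q i.1 i.2).prod

/-- `gw` is the family `w ↦ g_w`, i.e. `g_w` is the product of the `g_i` along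
any reduced expression of `w` (well defined by Matsumoto's lemma). -/
def GwSpec (gw : Equiv.Perm (Fin n) → Y K r n q) : Prop :=
  ∀ (w : Equiv.Perm (Fin n)) (l : Word n), IsReducedWord n l w → gw w = gword K r n q l

/-- Bruhat order: `u ≤ w` iff some reduced word of `w` has a subword which is a
reduced word of `u`. -/
def BruhatLE (u w : Equiv.Perm (Fin n)) : Prop :=
  ∃ l : Word n, IsReducedWord n l w ∧ ∃ l' : Word n, l'.Sublist l ∧ IsReducedWord n l' u

def BruhatLT (u w : Equiv.Perm (Fin n)) : Prop := BruhatLE n u w ∧ u ≠ w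

/-! ### Monomials and distinguished subalgebras -/

/-- `XU` is a family of units lifting the commuting elements `X_j` (each `X_j`
is invertible in `Ŷ_{r,n}^K`). -/
def XUSpec (XU : Fin n → (Y K r n q)ˣ) : Prop :=
  ∀ j, (XU j : Y K r n q) = X K r n q j

/-- The monomial `X^α = X_1^{α_1} ⋯ X_n^{α_n}`, `α ∈ ℤ^n`. -/
def Xpow (XU : Fin n → (Y K r n q)ˣ) (α : Fin n → ℤ) : Y K r n q :=
  ((List.finRange n).map fun j => ((XU j ^ α j : (Y K r n q)ˣ) : Y K r n q)).prod

/-- The monomial `t^β = t_1^{β_1} ⋯ t_n^{β_n}`, `β ∈ (ℤ/rℤ)^n`. -/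
def tpow (β : Fin n → ZMod r) : Y K r n q :=
  ((List.finRange n).map fun j => t K r n q j ^ (β j).val).prod

/-- The subalgebra `KT` generated by `t_1, …, t_n` (the group algebra of
`T = (ℤ/rℤ)^n`). -/
def KT : Subalgebra K (Y K r n q) := Algebra.adjoin K (Set.range (t K r n q))

/-- The Laurent polynomial subalgebra `P_n^K` generated by `X_1^{±1}, …, X_n^{±1}`. -/
def Pn (XU : Fin n → (Y K r n q)ˣ) : Subalgebra K (Y K r n q) :=
  Algebra.adjoin K
    ((Set.range fun j => ((XU j : (Y K r n q)ˣ) : Y K r n q)) ∪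
      (Set.range fun j => (((XU j)⁻¹ : (Y K r n q)ˣ) : Y K r n q)))

/-- The subalgebra `P_n^K(T)` generated by `t_1, …, t_n` and `X_1^{±1}, …, X_n^{±1}`. -/
def PT (XU : Fin n → (Y K r n q)ˣ) : Subalgebra K (Y K r n q) :=
  Algebra.adjoin K
    (Set.range (t K r n q) ∪
      (Set.range fun j => ((XU j : (Y K r n q)ˣ) : Y K r n q)) ∪
      (Set.range fun j => (((XU j)⁻¹ : (Y K r n q)ˣ) : Y K r n q)))

/-- The subalgebra of `Ŷ_{r,n}^K` generated by all `t_j`, all `X_j^{±1}`, and the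
`g_w` for `w` in a set `W` of permutations (e.g. a Young subgroup). -/
def Ysub (XU : Fin n → (Y K r n q)ˣ) (gw : Equiv.Perm (Fin n) → Y K r n q)
    (W : Set (Equiv.Perm (Fin n))) : Subalgebra K (Y K r n q) :=
  Algebra.adjoin K
    (Set.range (t K r n q) ∪
      (Set.range fun j => ((XU j : (Y K r n q)ˣ) : Y K r n q)) ∪
      (Set.range fun j => (((XU j)⁻¹ : (Y K r n q)ˣ) : Y K r n q)) ∪
      (gw '' W))

/-- The Young subgroup `S_μ` attached to a block function `c : Fin n → Fin r`
(for monotone `c`, this is the Young subgroup of the composition `μ` whose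
parts are the fiber sizes of `c`): permutations preserving the blocks. -/
def Smu (c : Fin n → Fin r) : Set (Equiv.Perm (Fin n)) :=
  {w : Equiv.Perm (Fin n) | ∀ j, c (w j) = c j}

/-- Permutations fixing all positions `≥ m` (the subgroup `S_m ⊆ S_n`). -/
def SFix (m : ℕ) : Set (Equiv.Perm (Fin n)) :=
  {w : Equiv.Perm (Fin n) | ∀ j : Fin n, m ≤ j.1 → w j = j}

/-! ### Isotypic components -/

section Modules

variable (M : Type) [AddCommGroup M] [Module K M] [Module (Y K r n q) M]
  [IsScalarTower K (Y K r n q) M]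

/-- The `V(μ)`-isotypic component of `M` as a `KT`-module: since `V(μ)` is the
one-dimensional `KT`-module on which `t_j` acts by the scalar `ζ^{c j}`, this is
the simultaneous eigenspace. Here `ζ` is a primitive `r`-th root of unity and
the simple `K(ℤ/rℤ)`-modules are `V_k : t ↦ ζ^{k}`, `k : Fin r`. -/
def Imu (ζ : K) (c : Fin n → Fin r) : Submodule K M where
  carrier := {m : M | ∀ j : Fin n, t K r n q j • m = ζ ^ ((c j : ℕ)) • m}
  add_mem' := by
    intro a b ha hb
    intro j
    rw [smul_add, ha j, hb j, smul_add]
  zero_mem' := by intro j; simp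
  smul_mem' := by
    intro k m hm
    intro j
    rw [smul_comm, hm j, smul_comm]

/-- `M_μ := ∑_{w ∈ S_n} g_w (I_μ M)`. -/
def Mmu (ζ : K) (c : Fin n → Fin r) (gw : Equiv.Perm (Fin n) → Y K r n q) :
    Submodule K M :=
  Submodule.span K
    {x : M | ∃ w : Equiv.Perm (Fin n), ∃ m ∈ Imu K r n q M ζ c, x = gw w • m}

end Modules

/-! ### Affine Hecke algebras of type A (tensor-product form)

`HH K q n r c` is the tensor product `Ĥ_{μ_1}^K ⊗ ⋯ ⊗ Ĥ_{μ_r}^K` of affine Hecke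
algebras, presented globally: generators `T_i` for those adjacencies `i, i+1`
lying in a common block of `c : Fin n → Fin r`, and invertible `Y_j` for all
`j`.  (For `r = 1` and `c` constant this is the affine Hecke algebra `Ĥ_n^K`.) -/

inductive HGen (n r : ℕ) (c : Fin n → Fin r) : Type
  | T (i : ℕ) (h : i + 1 < n) (hc : c ⟨i, by omega⟩ = c ⟨i + 1, h⟩) : HGen n r c
  | Y (j : Fin n) : HGen n r c
  | Yinv (j : Fin n) : HGen n r c

end YH

namespace YH

variable (K : Type) [Field K] (q : K) {n r : ℕ}

abbrev FH (c : Fin n → Fin r) := FreeAlgebra K (HGen n r c)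

def TFh (c : Fin n → Fin r) (i : ℕ) (h : i + 1 < n)
    (hc : c ⟨i, by omega⟩ = c ⟨i + 1, h⟩) : FH K c :=
  FreeAlgebra.ι K (HGen.T i h hc)
def YFh (c : Fin n → Fin r) (j : Fin n) : FH K c := FreeAlgebra.ι K (HGen.Y j)
def YinvFh (c : Fin n → Fin r) (j : Fin n) : FH K c := FreeAlgebra.ι K (HGen.Yinv j)

/-- Defining relations of the (tensor product of) affine Hecke algebra(s). -/
inductive HRel (c : Fin n → Fin r) : FH K c → FH K c → Prop
  | quad {i : ℕ} (h : i + 1 < n) (hc : c ⟨i, by omega⟩ = c ⟨i + 1, h⟩) :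
      HRel c ((TFh K c i h hc - algebraMap K (FH K c) q) *
          (TFh K c i h hc + algebraMap K (FH K c) q⁻¹)) 0
  | braid {i : ℕ} (h : i + 2 < n)
      (hc1 : c ⟨i, by omega⟩ = c ⟨i + 1, by omega⟩)
      (hc2 : c ⟨i + 1, by omega⟩ = c ⟨i + 2, h⟩) :
      HRel c
        (TFh K c i (by omega) hc1 * TFh K c (i + 1) (by omega) hc2 *
          TFh K c i (by omega) hc1)
        (TFh K c (i + 1) (by omega) hc2 * TFh K c i (by omega) hc1 *
          TFh K c (i + 1) (by omega) hc2)
  | TT {i j : ℕ} (hi : i + 1 < n) (hci : c ⟨i, by omega⟩ = c ⟨i + 1, hi⟩)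
      (hj : j + 1 < n) (hcj : c ⟨j, by omega⟩ = c ⟨j + 1, hj⟩)
      (hij : i + 2 ≤ j ∨ j + 2 ≤ i) :
      HRel c (TFh K c i hi hci * TFh K c j hj hcj)
        (TFh K c j hj hcj * TFh K c i hi hci)
  | YY (j k : Fin n) : HRel c (YFh K c j * YFh K c k) (YFh K c k * YFh K c j)
  | YYinv (j : Fin n) : HRel c (YFh K c j * YinvFh K c j) 1
  | YinvY (j : Fin n) : HRel c (YinvFh K c j * YFh K c j) 1
  | TYT {i : ℕ} (h : i + 1 < n) (hc : c ⟨i, by omega⟩ = c ⟨i + 1, h⟩) :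
      HRel c (TFh K c i h hc * YFh K c ⟨i, by omega⟩ * TFh K c i h hc)
        (YFh K c ⟨i + 1, h⟩)
  | TY {i : ℕ} (h : i + 1 < n) (hc : c ⟨i, by omega⟩ = c ⟨i + 1, h⟩)
      (j : Fin n) (hj1 : j.1 ≠ i) (hj2 : j.1 ≠ i + 1) :
      HRel c (TFh K c i h hc * YFh K c j) (YFh K c j * TFh K c i h hc)

/-- The algebra `Ĥ_{μ_1}^K ⊗ ⋯ ⊗ Ĥ_{μ_r}^K` (for `c` monotone with fiber sizes
`μ_k`); for `r = 1` it is the affine Hecke algebra `Ĥ_n^K` of type `A`. -/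
abbrev HH (c : Fin n → Fin r) := RingQuot (HRel K q c)

def mkH (c : Fin n → Fin r) : FH K c →ₐ[K] HH K q c := RingQuot.mkAlgHom K (HRel K q c)

/-- The generator `T_i` (for an adjacency internal to a block of `c`). -/
def Tg (c : Fin n → Fin r) (i : ℕ) (h : i + 1 < n)
    (hc : c ⟨i, by omega⟩ = c ⟨i + 1, h⟩) : HH K q c :=
  mkH K q c (TFh K c i h hc)
/-- The generator `Y_j`. -/
def Yg (c : Fin n → Fin r) (j : Fin n) : HH K q c := mkH K q c (YFh K c j)
/-- The generator `Y_j^{-1}`. -/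
def Yinvg (c : Fin n → Fin r) (j : Fin n) : HH K q c := mkH K q c (YinvFh K c j)

end YH

namespace YH

variable (K : Type) [Field K] (r n : ℕ) (q : K)

/-! ### Actions and induced modules -/

/-- The action of an algebra `R` on a module `M` as an algebra homomorphism
`R →ₐ[K] End_K(M)`. -/
def actHom (R : Type) [Ring R] [Algebra K R] (M : Type) [AddCommGroup M] [Module K M]
    [Module R M] [IsScalarTower K R M] : R →ₐ[K] Module.End K M where
  toFun a :=
    { toFun := fun m => a • m
      map_add' := fun x y => smul_add a x y
      map_smul' := fun k m => (smul_comm k a m).symm }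
  map_one' := by ext m; exact one_smul R m
  map_mul' a b := by ext m; exact mul_smul a b m
  map_zero' := by ext m; exact zero_smul R m
  map_add' a b := by ext m; exact add_smul a b m
  commutes' k := by
    ext m
    simp [Module.algebraMap_end_apply, algebraMap_smul]

/-- A `K`-space `P` with action `ρ` of an algebra `R` is "simple" if it is
nonzero and has no proper nonzero `ρ`-stable subspace. -/
def SimpleVia {R : Type} [Ring R] [Algebra K R] {P : Type} [AddCommGroup P] [Module K P]
    (ρ : R →ₐ[K] Module.End K P) : Prop :=
  Nontrivial P ∧
    ∀ Q : Submodule K P, (∀ h : R, ∀ v ∈ Q, ρ h v ∈ Q) → Q = ⊥ ∨ Q = ⊤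

/-- The relation submodule defining the induced module
`Ŷ_{r,n}^K ⊗_{Ŷ_{r,μ}^K} (V(μ) ⊗ P)`, where `P` is a module over
`Ĥ_{μ_1}^K ⊗ ⋯ ⊗ Ĥ_{μ_r}^K` (given by `ρ`), and `V(μ)` is the one-dimensional
`KT`-module attached to `c` (and a primitive `r`-th root of unity `ζ`):
we quotient `Ŷ_{r,n}^K ⊗_K P` by the `Ŷ`-span of the relations
`t_j ⊗ p = ζ^{c j} (1 ⊗ p)`, `g_i ⊗ p = 1 ⊗ T_i p` (`i` internal), and
`X_j ⊗ p = 1 ⊗ Y_j p`. -/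
def IndRel (ζ : K) (c : Fin n → Fin r) (P : Type) [AddCommGroup P] [Module K P]
    (ρ : HH K q c →ₐ[K] Module.End K P) :
    Submodule (Y K r n q) (Y K r n q ⊗[K] P) :=
  Submodule.span (Y K r n q)
    ({z : Y K r n q ⊗[K] P | ∃ (j : Fin n) (p : P),
        z = t K r n q j ⊗ₜ[K] p - (1 : Y K r n q) ⊗ₜ[K] (ζ ^ ((c j : ℕ)) • p)} ∪
      {z | ∃ (i : ℕ) (hi : i + 1 < n) (hc : c ⟨i, by omega⟩ = c ⟨i + 1, hi⟩) (p : P),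
        z = g K r n q i hi ⊗ₜ[K] p - (1 : Y K r n q) ⊗ₜ[K] (ρ (Tg K q c i hi hc) p)} ∪
      {z | ∃ (j : Fin n) (p : P),
        z = X K r n q j ⊗ₜ[K] p - (1 : Y K r n q) ⊗ₜ[K] (ρ (Yg K q c j) p)})

/-- The induced `Ŷ_{r,n}^K`-module `S_μ(L.) = Ŷ_{r,n}^K ⊗_{Ŷ_{r,μ}^K} (V(μ) ⊗ P)`. -/
def Ind (ζ : K) (c : Fin n → Fin r) (P : Type) [AddCommGroup P] [Module K P]
    (ρ : HH K q c →ₐ[K] Module.End K P) : Type :=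
  @HasQuotient.Quotient (Y K r n q ⊗[K] P) _
    (@Submodule.hasQuotient (Y K r n q) _ _ TensorProduct.addCommGroup _) (IndRel K r n q ζ c P ρ)

instance (ζ : K) (c : Fin n → Fin r) (P : Type) [AddCommGroup P] [Module K P]
    (ρ : HH K q c →ₐ[K] Module.End K P) : AddCommGroup (Ind K r n q ζ c P ρ) :=
  inferInstanceAs (AddCommGroup (@HasQuotient.Quotient (Y K r n q ⊗[K] P) _
    (@Submodule.hasQuotient (Y K r n q) _ _ TensorProduct.addCommGroup _) (IndRel K r n q ζ c P ρ)))

instance (ζ : K) (c : Fin n → Fin r) (P : Type) [AddCommGroup P] [Module K P]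
    (ρ : HH K q c →ₐ[K] Module.End K P) : Module (Y K r n q) (Ind K r n q ζ c P ρ) :=
  inferInstanceAs (Module (Y K r n q) (@HasQuotient.Quotient (Y K r n q ⊗[K] P) _
    (@Submodule.hasQuotient (Y K r n q) _ _ TensorProduct.addCommGroup _) (IndRel K r n q ζ c P ρ)))

/-- The map skipping position `p`: `j ↦ j` if `j < p`, else `j ↦ j+1`
(the order embedding `Fin (n-1) → Fin n` avoiding `p`). -/
def skipIns (p : ℕ) (j : Fin (n - 1)) : Fin n :=
  if j.1 < p then ⟨j.1, by have := j.2; omega⟩ else ⟨j.1 + 1, by have := j.2; omega⟩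


end YH

/-! ### Auxiliary lemmas for Statement 19 -/

namespace YH

section S19Basic

variable {K : Type} [Field K] {r n : ℕ} {q : K}

lemma rel_eq {x y : FY K n} (h : YRel K r n q x y) :
    mkY K r n q x = mkY K r n q y :=
  RingQuot.mkAlgHom_rel K h

lemma t_mul_t (i j : Fin n) :
    t K r n q i * t K r n q j = t K r n q j * t K r n q i := by
  have := rel_eq (K := K) (r := r) (n := n) (q := q) (YRel.tt i j)
  simpa only [t, map_mul] using this

lemma t_pow_r (j : Fin n) : t K r n q j ^ r = (1 : Y K r n q) := by
  have := rel_eq (K := K) (r := r) (n := n) (q := q) (YRel.tr j)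
  simpa only [t, map_pow, map_one] using this

lemma g_mul_t (i : ℕ) (hi : i + 1 < n) (j : Fin n) :
    g K r n q i hi * t K r n q j = t K r n q (swapi n i hi j) * g K r n q i hi := by
  have := rel_eq (K := K) (r := r) (n := n) (q := q) (YRel.gt hi j)
  simpa only [t, g, map_mul] using this

lemma t_mul_g (i : ℕ) (hi : i + 1 < n) (j : Fin n) :
    t K r n q j * g K r n q i hi = g K r n q i hi * t K r n q (swapi n i hi j) := by
  have := g_mul_t (K := K) (r := r) (q := q) i hi (swapi n i hi j)
  rw [show swapi n i hi (swapi n i hi j) = j from Equiv.swap_apply_self _ _ _] at this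
  exact this.symm

lemma g_sq (i : ℕ) (hi : i + 1 < n) :
    g K r n q i hi * g K r n q i hi
      = 1 + (q - q⁻¹) • (e K r n q i hi * g K r n q i hi) := by
  have := rel_eq (K := K) (r := r) (n := n) (q := q) (YRel.gsq hi)
  simpa only [g, e, map_mul, map_add, map_one, map_smul] using this

lemma e_eq (i : ℕ) (hi : i + 1 < n) :
    e K r n q i hi = (r : K)⁻¹ • ∑ s ∈ Finset.range r,
      t K r n q ⟨i, by omega⟩ ^ s * t K r n q ⟨i + 1, hi⟩ ^ ((r - s) % r) := by
  show mkY K r n q (eF K r n i hi) = _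
  rw [eF, map_smul, map_sum]
  simp only [map_mul, map_pow]
  rfl

lemma t_mul_X1 (j : Fin n) :
    t K r n q j * X1 K r n q = X1 K r n q * t K r n q j := by
  have := rel_eq (K := K) (r := r) (n := n) (q := q) (YRel.tX j)
  simpa only [t, X1, map_mul] using this

lemma g_mul_X1 (i : ℕ) (hi : i + 1 < n) (h1 : 1 ≤ i) :
    g K r n q i hi * X1 K r n q = X1 K r n q * g K r n q i hi := by
  have := rel_eq (K := K) (r := r) (n := n) (q := q) (YRel.gX hi h1)
  simpa only [g, X1, map_mul] using this

lemma g_mul_g (i j : ℕ) (hi : i + 1 < n) (hj : j + 1 < n) (hij : i + 2 ≤ j ∨ j + 2 ≤ i) :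
    g K r n q i hi * g K r n q j hj = g K r n q j hj * g K r n q i hi := by
  have := rel_eq (K := K) (r := r) (n := n) (q := q) (YRel.gg hi hj hij)
  simpa only [g, map_mul] using this

lemma braid (i : ℕ) (h : i + 2 < n) :
    g K r n q i (by omega) * g K r n q (i + 1) h * g K r n q i (by omega)
      = g K r n q (i + 1) h * g K r n q i (by omega) * g K r n q (i + 1) h := by
  have := rel_eq (K := K) (r := r) (n := n) (q := q) (YRel.braid h)
  simpa only [g, map_mul] using this

lemma conj_helper {A : Type} [Semiring A] {t t' g x : A}
    (h1 : t * g = g * t') (h2 : t' * x = x * t') (h3 : t' * g = g * t) :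
    t * (g * x * g) = (g * x * g) * t := by
  calc t * (g * x * g) = (t * g) * (x * g) := by rw [mul_assoc, mul_assoc]
    _ = g * ((t' * x) * g) := by rw [h1, mul_assoc, mul_assoc]
    _ = g * (x * (t' * g)) := by rw [h2, mul_assoc]
    _ = (g * x * g) * t := by rw [h3]; simp only [mul_assoc]

lemma t_mul_Xrec : ∀ (k : ℕ) (hk : k < n) (j : Fin n),
    t K r n q j * Xrec K r n q k hk = Xrec K r n q k hk * t K r n q j := by
  intro k
  induction k with
  | zero => intro hk j; exact t_mul_X1 j
  | succ k ih =>
    intro hk j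
    show t K r n q j * (g K r n q k (by omega) * Xrec K r n q k (by omega)
        * g K r n q k (by omega)) = _
    have hswap : swapi n k (by omega) (swapi n k (by omega) j) = j :=
      Equiv.swap_apply_self _ _ _
    exact conj_helper (t_mul_g k (by omega) j) (ih (by omega) _)
      (by rw [t_mul_g k (by omega) (swapi n k (by omega) j), hswap])

lemma t_pow_mul_t_pow (a b : Fin n) (s u : ℕ) :
    t K r n q a ^ s * t K r n q b ^ u = t K r n q b ^ u * t K r n q a ^ s := by
  have hc : Commute (t K r n q a) (t K r n q b) := t_mul_t a b
  exact hc.pow_pow s u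

lemma g_mul_t_pow (i : ℕ) (hi : i + 1 < n) (jj : Fin n) (s : ℕ) :
    g K r n q i hi * t K r n q jj ^ s = t K r n q (swapi n i hi jj) ^ s * g K r n q i hi := by
  induction s with
  | zero => simp
  | succ s ih =>
    rw [pow_succ, ← mul_assoc, ih, mul_assoc, g_mul_t, ← mul_assoc, ← pow_succ]

/-- `g_i` commutes with `e_i`. -/
lemma g_mul_e (i : ℕ) (hi : i + 1 < n) :
    g K r n q i hi * e K r n q i hi = e K r n q i hi * g K r n q i hi := by
  have ha : swapi n i hi ⟨i, by omega⟩ = ⟨i + 1, hi⟩ := Equiv.swap_apply_left _ _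
  have hb : swapi n i hi ⟨i + 1, hi⟩ = ⟨i, by omega⟩ := Equiv.swap_apply_right _ _
  set t1 := t K r n q ⟨i, by omega⟩ with ht1
  set t2 := t K r n q ⟨i + 1, hi⟩ with ht2
  have key : ∀ s : ℕ,
      g K r n q i hi * (t1 ^ s * t2 ^ ((r - s) % r))
        = (t1 ^ ((r - s) % r) * t2 ^ s) * g K r n q i hi := by
    intro s
    rw [← mul_assoc, g_mul_t_pow, ha, mul_assoc, g_mul_t_pow, hb, ← mul_assoc,
      t_pow_mul_t_pow]
  have hsum : ∑ s ∈ Finset.range r, t1 ^ ((r - s) % r) * t2 ^ s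
      = ∑ s ∈ Finset.range r, t1 ^ s * t2 ^ ((r - s) % r) := by
    have sig_lt : ∀ a : ℕ, a < r → (r - a) % r < r := fun a ha =>
      Nat.mod_lt _ (by omega)
    have sig_sig : ∀ a : ℕ, a < r → (r - (r - a) % r) % r = a := by
      intro a ha
      rcases Nat.eq_zero_or_pos a with rfl | hpos
      · simp [Nat.sub_zero, Nat.mod_self]
      · have h1 : r - a < r := by omega
        rw [Nat.mod_eq_of_lt h1, show r - (r - a) = a by omega, Nat.mod_eq_of_lt ha]
    refine Finset.sum_nbij' (fun s => (r - s) % r) (fun s => (r - s) % r) ?_ ?_ ?_ ?_ ?_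
    · intro a ha'
      simp only [Finset.mem_range] at ha' ⊢
      exact sig_lt a ha'
    · intro a ha'
      simp only [Finset.mem_range] at ha' ⊢
      exact sig_lt a ha'
    · intro a ha'
      simp only [Finset.mem_range] at ha'
      exact sig_sig a ha'
    · intro a ha'
      simp only [Finset.mem_range] at ha'
      exact sig_sig a ha'
    · intro a ha'
      simp only [Finset.mem_range] at ha'
      rw [sig_sig a ha']
  rw [e_eq, mul_smul_comm, smul_mul_assoc]
  congr 1
  rw [Finset.mul_sum, Finset.sum_mul]
  calc ∑ s ∈ Finset.range r, g K r n q i hi * (t1 ^ s * t2 ^ ((r - s) % r))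
      = ∑ s ∈ Finset.range r, (t1 ^ ((r - s) % r) * t2 ^ s) * g K r n q i hi :=
        Finset.sum_congr rfl fun s _ => key s
    _ = (∑ s ∈ Finset.range r, t1 ^ ((r - s) % r) * t2 ^ s) * g K r n q i hi :=
        (Finset.sum_mul _ _ _).symm
    _ = (∑ s ∈ Finset.range r, t1 ^ s * t2 ^ ((r - s) % r)) * g K r n q i hi := by
        rw [hsum]
    _ = ∑ s ∈ Finset.range r, t1 ^ s * t2 ^ ((r - s) % r) * g K r n q i hi :=
        Finset.sum_mul _ _ _

end S19Basic

section S19Mod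

variable {K : Type} [Field K] {r n : ℕ} {q : K} {ζ : K}
variable {M : Type} [AddCommGroup M] [Module K M] [Module (Y K r n q) M]
  [IsScalarTower K (Y K r n q) M]

lemma swapi_left (i : ℕ) (hi : i + 1 < n) :
    swapi n i hi ⟨i, by omega⟩ = ⟨i + 1, hi⟩ := Equiv.swap_apply_left _ _

lemma swapi_right (i : ℕ) (hi : i + 1 < n) :
    swapi n i hi ⟨i + 1, hi⟩ = ⟨i, by omega⟩ := Equiv.swap_apply_right _ _

lemma swapi_other (i : ℕ) (hi : i + 1 < n) (j : Fin n) (h1 : j.1 ≠ i) (h2 : j.1 ≠ i + 1) :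
    swapi n i hi j = j :=
  Equiv.swap_apply_of_ne_of_ne (fun h => h1 (by rw [h])) (fun h => h2 (by rw [h]))

lemma g_mul_ginv (i : ℕ) (hi : i + 1 < n) :
    g K r n q i hi * (g K r n q i hi - (q - q⁻¹) • e K r n q i hi) = 1 := by
  rw [mul_sub, g_sq, mul_smul_comm, g_mul_e, add_sub_cancel_right]

lemma ginv_mul_g (i : ℕ) (hi : i + 1 < n) :
    (g K r n q i hi - (q - q⁻¹) • e K r n q i hi) * g K r n q i hi = 1 := by
  rw [sub_mul, g_sq, smul_mul_assoc, add_sub_cancel_right]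


lemma ksmul_comm (k : K) (y : Y K r n q) (m : M) : y • (k • m) = k • (y • m) := by
  rw [← algebraMap_smul (Y K r n q) k m, ← mul_smul, ← Algebra.commutes, mul_smul,
    algebraMap_smul]

lemma g_smul_cancel (i : ℕ) (hi : i + 1 < n) {x : M}
    (h : g K r n q i hi • x = 0) : x = 0 := by
  calc x = ((g K r n q i hi - (q - q⁻¹) • e K r n q i hi) * g K r n q i hi) • x := by
        rw [ginv_mul_g, one_smul]
    _ = (g K r n q i hi - (q - q⁻¹) • e K r n q i hi) • (g K r n q i hi • x) := mul_smul _ _ _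
    _ = 0 := by rw [h, smul_zero]

lemma mem_Imu_iff {c : Fin n → Fin r} {m : M} :
    m ∈ Imu K r n q M ζ c ↔ ∀ j : Fin n, t K r n q j • m = (ζ ^ ((c j : ℕ))) • m :=
  Iff.rfl

lemma t_pow_smul {c : Fin n → Fin r} {m : M} (hm : m ∈ Imu K r n q M ζ c)
    (j : Fin n) (s : ℕ) :
    (t K r n q j ^ s) • m = ((ζ ^ ((c j : ℕ))) ^ s) • m := by
  induction s with
  | zero => rw [pow_zero, pow_zero, one_smul, one_smul]
  | succ s ih =>
    conv_lhs => rw [pow_succ]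
    rw [mul_smul, hm j, ksmul_comm, ih, smul_smul, pow_succ, mul_comm]

lemma e_smul_zero (hζ : IsPrimitiveRoot ζ r) (i : ℕ) (hi : i + 1 < n)
    {c : Fin n → Fin r} {m : M} (hm : m ∈ Imu K r n q M ζ c)
    (hne : c ⟨i, by omega⟩ ≠ c ⟨i + 1, hi⟩) :
    e K r n q i hi • m = 0 := by
  have hr0 : 0 < r := Fin.pos_iff_nonempty.mpr ⟨c ⟨i, by omega⟩⟩
  set a : ℕ := (c ⟨i, by omega⟩ : ℕ) with hadef
  set b : ℕ := (c ⟨i + 1, hi⟩ : ℕ) with hbdef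
  have hζ0 : ζ ≠ 0 := hζ.ne_zero (by omega)
  have hbr : (ζ ^ b) ^ r = 1 := by
    rw [← pow_mul, mul_comm, pow_mul, hζ.pow_eq_one, one_pow]
  have har : (ζ ^ a) ^ r = 1 := by
    rw [← pow_mul, mul_comm, pow_mul, hζ.pow_eq_one, one_pow]
  set u : K := ζ ^ a * (ζ ^ b)⁻¹ with hudef
  have hu1 : u ≠ 1 := by
    intro h
    have hb0 : (ζ : K) ^ b ≠ 0 := pow_ne_zero _ hζ0
    have : ζ ^ a = ζ ^ b := (mul_inv_eq_one₀ hb0).mp h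
    exact hne (Fin.ext (hζ.pow_inj (c ⟨i, by omega⟩).2 (c ⟨i + 1, hi⟩).2 this))
  have hur : u ^ r = 1 := by
    rw [hudef, mul_pow, har, inv_pow, hbr, inv_one, one_mul]
  have hcoef : ∀ s ∈ Finset.range r,
      (ζ ^ a) ^ s * (ζ ^ b) ^ ((r - s) % r) = u ^ s := by
    intro s hs
    simp only [Finset.mem_range] at hs
    have h1 : (ζ ^ b) ^ ((r - s) % r) * (ζ ^ b) ^ s = 1 := by
      rw [← pow_add]
      rcases Nat.eq_zero_or_pos s with rfl | hpos
      · simp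
      · rw [Nat.mod_eq_of_lt (by omega), show r - s + s = r by omega, hbr]
    have h2 : (ζ ^ b) ^ ((r - s) % r) = ((ζ ^ b)⁻¹) ^ s := by
      rw [inv_pow]
      exact eq_inv_of_mul_eq_one_left h1
    rw [h2, hudef, mul_pow]
  have hsum : ∑ s ∈ Finset.range r, (ζ ^ a) ^ s * (ζ ^ b) ^ ((r - s) % r) = 0 := by
    rw [Finset.sum_congr rfl hcoef, geom_sum_eq hu1, hur, sub_self, zero_div]
  rw [e_eq, smul_assoc]
  have : (∑ s ∈ Finset.range r,
      t K r n q ⟨i, by omega⟩ ^ s * t K r n q ⟨i + 1, hi⟩ ^ ((r - s) % r)) • m = (0 : M) := by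
    rw [Finset.sum_smul]
    have hterm : ∀ s ∈ Finset.range r,
        (t K r n q ⟨i, by omega⟩ ^ s * t K r n q ⟨i + 1, hi⟩ ^ ((r - s) % r)) • m
          = ((ζ ^ a) ^ s * (ζ ^ b) ^ ((r - s) % r)) • m := by
      intro s _
      rw [mul_smul, t_pow_smul hm, ksmul_comm, t_pow_smul hm, smul_smul, mul_comm]
    rw [Finset.sum_congr rfl hterm, ← Finset.sum_smul, hsum, zero_smul]
  rw [this, smul_zero]

lemma g_smul_Imu {c : Fin n → Fin r} {m : M} (hm : m ∈ Imu K r n q M ζ c)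
    (i : ℕ) (hi : i + 1 < n) :
    g K r n q i hi • m ∈ Imu K r n q M ζ (c ∘ swapi n i hi) := by
  intro j
  show t K r n q j • (g K r n q i hi • m) = _
  rw [← mul_smul, t_mul_g, mul_smul, hm (swapi n i hi j), ksmul_comm]
  rfl

lemma Xrec_smul_Imu {c : Fin n → Fin r} {m : M} (hm : m ∈ Imu K r n q M ζ c)
    (k : ℕ) (hk : k < n) :
    Xrec K r n q k hk • m ∈ Imu K r n q M ζ c := by
  intro j
  show t K r n q j • (Xrec K r n q k hk • m) = _
  rw [← mul_smul, t_mul_Xrec, mul_smul, hm j, ksmul_comm]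

lemma g_invol (hζ : IsPrimitiveRoot ζ r) (i : ℕ) (hi : i + 1 < n)
    {c : Fin n → Fin r} {m : M} (hm : m ∈ Imu K r n q M ζ c)
    (hne : c ⟨i, by omega⟩ ≠ c ⟨i + 1, hi⟩) :
    g K r n q i hi • (g K r n q i hi • m) = m := by
  have h2 : g K r n q i hi • m ∈ Imu K r n q M ζ (c ∘ swapi n i hi) := g_smul_Imu hm i hi
  have hne2 : (c ∘ swapi n i hi) ⟨i, by omega⟩ ≠ (c ∘ swapi n i hi) ⟨i + 1, hi⟩ := by
    simp only [Function.comp_apply, swapi_left, swapi_right]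
    exact hne.symm
  have h0 : e K r n q i hi • (g K r n q i hi • m) = 0 := e_smul_zero hζ i hi h2 hne2
  calc g K r n q i hi • (g K r n q i hi • m)
      = (g K r n q i hi * g K r n q i hi) • m := (mul_smul _ _ _).symm
    _ = (1 + (q - q⁻¹) • (e K r n q i hi * g K r n q i hi)) • m := by rw [g_sq]
    _ = m + (q - q⁻¹) • (e K r n q i hi • (g K r n q i hi • m)) := by
        rw [add_smul, one_smul, smul_assoc, mul_smul]
    _ = m := by rw [h0, smul_zero, add_zero]

end S19Mod

/-! ### Products of linear factors -/

section S19PL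

variable {K : Type} [Field K] {r n : ℕ} {q : K} {ζ : K}

/-- Product of linear factors `∏ (x - c)`. -/
def PL (x : Y K r n q) (L : List K) : Y K r n q :=
  (L.map fun c0 => x - algebraMap K (Y K r n q) c0).prod

lemma PL_nil (x : Y K r n q) : PL x [] = 1 := rfl

lemma PL_cons (x : Y K r n q) (c0 : K) (L : List K) :
    PL x (c0 :: L) = (x - algebraMap K (Y K r n q) c0) * PL x L := by
  simp [PL]

variable {M : Type} [AddCommGroup M] [Module K M] [Module (Y K r n q) M]
  [IsScalarTower K (Y K r n q) M]

lemma PL_smul_Imu {c : Fin n → Fin r} {m : M} (hm : m ∈ Imu K r n q M ζ c)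
    (k : ℕ) (hk : k < n) (L : List K) :
    PL (Xrec K r n q k hk) L • m ∈ Imu K r n q M ζ c := by
  induction L with
  | nil => rw [PL_nil, one_smul]; exact hm
  | cons c0 L ih =>
    rw [PL_cons, mul_smul]
    set v := PL (Xrec K r n q k hk) L • m
    have hv : v ∈ Imu K r n q M ζ c := ih
    rw [sub_smul, algebraMap_smul]
    exact Submodule.sub_mem _ (Xrec_smul_Imu hv k hk) (Submodule.smul_mem _ _ hv)

/-- Key conjugation lemma: on the isotypic component for a character with
`c i ≠ c (i+1)`, any polynomial in `X_{i+1}` acts as `g_i` conjugate of the same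
polynomial in `X_i`. -/
lemma PL_conj (hζ : IsPrimitiveRoot ζ r) (i : ℕ) (hi : i + 1 < n)
    {c : Fin n → Fin r} (hne : c ⟨i, by omega⟩ ≠ c ⟨i + 1, hi⟩)
    (L : List K) {m : M} (hm : m ∈ Imu K r n q M ζ c) :
    PL (Xrec K r n q (i + 1) hi) L • m
      = g K r n q i hi • (PL (Xrec K r n q i (by omega)) L • (g K r n q i hi • m)) := by
  have hne' : (c ∘ swapi n i hi) ⟨i, by omega⟩ ≠ (c ∘ swapi n i hi) ⟨i + 1, hi⟩ := by
    simp only [Function.comp_apply, swapi_left, swapi_right]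
    exact hne.symm
  induction L with
  | nil =>
    simp only [PL_nil, one_smul]
    rw [g_invol hζ i hi hm hne]
  | cons c0 L ih =>
    set v := PL (Xrec K r n q i (by omega)) L • (g K r n q i hi • m) with hv
    have hvmem : v ∈ Imu K r n q M ζ (c ∘ swapi n i hi) :=
      PL_smul_Imu (g_smul_Imu hm i hi) i (by omega) L
    have hXdef : Xrec K r n q (i + 1) hi
        = g K r n q i (by omega) * Xrec K r n q i (by omega) * g K r n q i (by omega) := rfl
    calc PL (Xrec K r n q (i + 1) hi) (c0 :: L) • m
        = (Xrec K r n q (i + 1) hi - algebraMap K (Y K r n q) c0) •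
            (PL (Xrec K r n q (i + 1) hi) L • m) := by rw [PL_cons, mul_smul]
      _ = (Xrec K r n q (i + 1) hi - algebraMap K (Y K r n q) c0) •
            (g K r n q i hi • v) := by rw [ih]
      _ = Xrec K r n q (i + 1) hi • (g K r n q i hi • v) - c0 • (g K r n q i hi • v) := by
            rw [sub_smul, algebraMap_smul]
      _ = g K r n q i hi • (Xrec K r n q i (by omega) • v) - c0 • (g K r n q i hi • v) := by
            rw [hXdef, mul_smul, mul_smul, g_invol hζ i hi hvmem hne', ← mul_smul]
      _ = g K r n q i hi • (Xrec K r n q i (by omega) • v) -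
            g K r n q i hi • (c0 • v) := by rw [ksmul_comm]
      _ = g K r n q i hi •
            ((Xrec K r n q i (by omega) - algebraMap K (Y K r n q) c0) • v) := by
            rw [← smul_sub, sub_smul, algebraMap_smul]
      _ = g K r n q i hi • (PL (Xrec K r n q i (by omega)) (c0 :: L) • (g K r n q i hi • m)) := by
            rw [PL_cons, mul_smul, hv]

end S19PL

/-! ### Commutation of `g i` with `X j`, `j ∉ {i, i+1}`, measure, monotonicity -/

section S19Comm

variable {K : Type} [Field K] {r n : ℕ} {q : K} {ζ : K}

lemma comm_conj {A : Type} [Semiring A] {a b x : A}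
    (h1 : a * b = b * a) (h2 : a * x = x * a) : a * (b * x * b) = (b * x * b) * a := by
  calc a * (b * x * b) = (a * b) * (x * b) := by simp only [mul_assoc]
    _ = (b * a) * (x * b) := by rw [h1]
    _ = b * ((a * x) * b) := by simp only [mul_assoc]
    _ = b * ((x * a) * b) := by rw [h2]
    _ = (b * x) * (a * b) := by simp only [mul_assoc]
    _ = (b * x) * (b * a) := by rw [h1]
    _ = (b * x * b) * a := by simp only [mul_assoc]

lemma braid_conj {A : Type} [Semiring A] {a b x : A}
    (hbr : a * b * a = b * a * b) (hbx : b * x = x * b) :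
    a * (b * (a * x * a) * b) = (b * (a * x * a) * b) * a := by
  have h1 : a * (b * (a * x * a) * b) = (a * b * a) * x * (a * b) := by
    simp only [mul_assoc]
  have h2 : (b * (a * x * a) * b) * a = (b * a) * x * (a * (b * a)) := by
    simp only [mul_assoc]
  rw [h1, h2, hbr]
  have h3 : b * a * b * x * (a * b) = b * a * (b * x) * (a * b) := by
    simp only [mul_assoc]
  rw [h3, hbx]
  have h4 : a * (b * a) = a * b * a := by simp only [mul_assoc]
  rw [h4, hbr]
  simp only [mul_assoc]

lemma g_Xrec_comm : ∀ (j : ℕ) (hj : j < n) (i : ℕ) (hi : i + 1 < n), j ≠ i → j ≠ i + 1 →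
    g K r n q i hi * Xrec K r n q j hj = Xrec K r n q j hj * g K r n q i hi := by
  intro j
  induction j using Nat.strong_induction_on with
  | _ j IH =>
    intro hj i hi hji hji1
    rcases lt_trichotomy j i with hlt | heq | hgt
    · -- j < i
      cases j with
      | zero => exact g_mul_X1 i hi (by omega)
      | succ j' =>
        show g K r n q i hi * (g K r n q j' (by omega) * Xrec K r n q j' (by omega)
            * g K r n q j' (by omega)) = _
        exact comm_conj (g_mul_g i j' hi (by omega) (by omega))
          (IH j' (by omega) (by omega) i hi (by omega) (by omega))
    · exact absurd heq hji
    · -- j > i, j ≠ i + 1, so j ≥ i + 2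
      by_cases hj2 : j = i + 2
      · subst hj2
        show g K r n q i hi * (g K r n q (i + 1) (by omega) *
            (g K r n q i (by omega) * Xrec K r n q i (by omega) * g K r n q i (by omega))
            * g K r n q (i + 1) (by omega)) = _
        have hbr : g K r n q i hi * g K r n q (i + 1) (by omega) * g K r n q i hi
            = g K r n q (i + 1) (by omega) * g K r n q i hi * g K r n q (i + 1) (by omega) :=
          braid i (by omega)
        have hbx : g K r n q (i + 1) (by omega) * Xrec K r n q i (by omega)
            = Xrec K r n q i (by omega) * g K r n q (i + 1) (by omega) :=
          IH i (by omega) (by omega) (i + 1) (by omega) (by omega) (by omega)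
        exact braid_conj hbr hbx
      · -- j ≥ i + 3
        obtain ⟨j', rfl⟩ : ∃ j', j = j' + 1 := ⟨j - 1, by omega⟩
        show g K r n q i hi * (g K r n q j' (by omega) * Xrec K r n q j' (by omega)
            * g K r n q j' (by omega)) = _
        exact comm_conj (g_mul_g i j' hi (by omega) (by omega))
          (IH j' (by omega) (by omega) i hi (by omega) (by omega))

lemma g_mul_PL (i : ℕ) (hi : i + 1 < n) (p : ℕ) (hp : p < n)
    (hne1 : p ≠ i) (hne2 : p ≠ i + 1) (L : List K) :
    g K r n q i hi * PL (Xrec K r n q p hp) L = PL (Xrec K r n q p hp) L * g K r n q i hi := by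
  induction L with
  | nil => rw [PL_nil, one_mul, mul_one]
  | cons c0 L ih =>
    have hfac : g K r n q i hi * (Xrec K r n q p hp - algebraMap K (Y K r n q) c0)
        = (Xrec K r n q p hp - algebraMap K (Y K r n q) c0) * g K r n q i hi := by
      rw [mul_sub, sub_mul, g_Xrec_comm p hp i hi hne1 hne2, ← Algebra.commutes]
    rw [PL_cons, ← mul_assoc, hfac, mul_assoc, ih, ← mul_assoc]

/-- The measure `∑ j (n - j) * χ j` which strictly decreases when an adjacent
descent is swapped. -/
def meas (χ : Fin n → Fin r) : ℕ := ∑ j : Fin n, (n - j.1) * (χ j : ℕ)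

lemma meas_swap_lt (i : ℕ) (hi : i + 1 < n) (χ : Fin n → Fin r)
    (hdesc : (χ ⟨i + 1, hi⟩ : ℕ) < (χ ⟨i, by omega⟩ : ℕ)) :
    meas (χ ∘ swapi n i hi) < meas χ := by
  set A : Fin n := ⟨i, by omega⟩ with hA
  set B : Fin n := ⟨i + 1, hi⟩ with hB
  have hAB : A ≠ B := by simp [hA, hB, Fin.ext_iff]
  have key : ∀ ψ : Fin n → Fin r, meas ψ
      = (n - A.1) * (ψ A : ℕ) + ((n - B.1) * (ψ B : ℕ)
          + ∑ j ∈ (Finset.univ.erase A).erase B, (n - j.1) * (ψ j : ℕ)) := by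
    intro ψ
    rw [meas, ← Finset.add_sum_erase _ _ (Finset.mem_univ A)]
    congr 1
    rw [← Finset.add_sum_erase _ _ (Finset.mem_erase.mpr ⟨hAB.symm, Finset.mem_univ B⟩)]
  have h1 : (χ ∘ swapi n i hi) A = χ B := by
    simp only [Function.comp_apply, hA, hB, swapi_left]
  have h2 : (χ ∘ swapi n i hi) B = χ A := by
    simp only [Function.comp_apply, hA, hB, swapi_right]
  have h3 : ∑ j ∈ (Finset.univ.erase A).erase B, (n - j.1) * ((χ ∘ swapi n i hi) j : ℕ)
      = ∑ j ∈ (Finset.univ.erase A).erase B, (n - j.1) * (χ j : ℕ) := by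
    refine Finset.sum_congr rfl fun j hj => ?_
    rw [Finset.mem_erase, Finset.mem_erase] at hj
    have hj1 : j.1 ≠ i := fun h => hj.2.1 (Fin.ext h)
    have hj2 : j.1 ≠ i + 1 := fun h => hj.1 (Fin.ext h)
    rw [Function.comp_apply, swapi_other i hi j hj1 hj2]
  rw [key χ, key (χ ∘ swapi n i hi), h1, h2, h3]
  have hnB : n - A.1 = (n - B.1) + 1 := by simp [hA, hB]; omega
  set d : ℕ := n - B.1 with hd
  set α : ℕ := (χ A : ℕ)
  set β : ℕ := (χ B : ℕ)
  rw [hnB]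
  have e1 : (d + 1) * β + (d * α + ∑ j ∈ (Finset.univ.erase A).erase B,
      (n - j.1) * (χ j : ℕ)) = (d * (α + β) + ∑ j ∈ (Finset.univ.erase A).erase B,
      (n - j.1) * (χ j : ℕ)) + β := by ring
  have e2 : (d + 1) * α + (d * β + ∑ j ∈ (Finset.univ.erase A).erase B,
      (n - j.1) * (χ j : ℕ)) = (d * (α + β) + ∑ j ∈ (Finset.univ.erase A).erase B,
      (n - j.1) * (χ j : ℕ)) + α := by ring
  rw [e1, e2]
  exact Nat.add_lt_add_left hdesc _

lemma monotone_of_adj (χ : Fin n → Fin r)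
    (h : ∀ (i : ℕ) (hi : i + 1 < n), χ ⟨i, by omega⟩ ≤ χ ⟨i + 1, hi⟩) : Monotone χ := by
  have key : ∀ (d : ℕ) (a : Fin n) (hb : a.1 + d < n), χ a ≤ χ ⟨a.1 + d, hb⟩ := by
    intro d
    induction d with
    | zero => intro a hb; exact le_of_eq (congrArg χ (Fin.ext rfl))
    | succ d ih =>
      intro a hb
      exact le_trans (ih a (by omega)) (h (a.1 + d) (by omega))
  intro a b hab
  have hab' : a.1 ≤ b.1 := hab
  have hb : b = ⟨a.1 + (b.1 - a.1), by omega⟩ := Fin.ext (by simp; omega)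
  rw [hb]
  exact key (b.1 - a.1) a (by omega)

end S19Comm

/-! ### The generalized cyclotomic condition -/

section S19Gen

variable {K : Type} [Field K] {r n : ℕ} {q : K} {ζ : K}
variable {M : Type} [AddCommGroup M] [Module K M] [Module (Y K r n q) M]
  [IsScalarTower K (Y K r n q) M]

/-- Forward direction: if `f(X_1)` kills `M`, then `f(X_p)` kills the `χ`-isotypic
component whenever `p` is minimal in its `χ`-fiber. -/
lemma gen_of_X1 (hζ : IsPrimitiveRoot ζ r) (L : List K)
    (h0 : ∀ m : M, PL (X1 K r n q) L • m = 0) :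
    ∀ (p : ℕ) (hp : p < n) (χ : Fin n → Fin r) (m : M), m ∈ Imu K r n q M ζ χ →
      (∀ j : Fin n, χ j = χ ⟨p, hp⟩ → p ≤ j.1) → PL (Xrec K r n q p hp) L • m = 0 := by
  intro p
  induction p with
  | zero => intro hp χ m hm _; exact h0 m
  | succ p ih =>
    intro hp χ m hm hmin
    have hne : χ ⟨p, by omega⟩ ≠ χ ⟨p + 1, hp⟩ := by
      intro hcontr
      have := hmin ⟨p, by omega⟩ hcontr
      simp at this
    rw [PL_conj hζ p hp hne L hm]
    have hmin' : ∀ j : Fin n, (χ ∘ swapi n p hp) j = (χ ∘ swapi n p hp) ⟨p, by omega⟩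
        → p ≤ j.1 := by
      intro j hj
      rw [Function.comp_apply, Function.comp_apply, swapi_left] at hj
      by_cases h1 : j.1 = p
      · omega
      by_cases h2 : j.1 = p + 1
      · omega
      · rw [swapi_other p hp j h1 h2] at hj
        have := hmin j hj
        omega
    rw [ih (by omega) (χ ∘ swapi n p hp) (g K r n q p hp • m) (g_smul_Imu hm p hp) hmin',
      smul_zero]

/-- Backward direction: if `f(X_p)` kills every monotone isotypic component at
first-of-block positions, then it kills every isotypic component at fiber-minimal
positions. -/
lemma gen_of_mono (hζ : IsPrimitiveRoot ζ r) (L : List K)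
    (hmono : ∀ (c : Fin n → Fin r), Monotone c → ∀ (p : Fin n),
      (∀ j : Fin n, c j = c p → p ≤ j) →
      ∀ m ∈ Imu K r n q M ζ c, PL (Xrec K r n q p.1 p.2) L • m = 0) :
    ∀ (p : ℕ) (hp : p < n) (χ : Fin n → Fin r) (m : M), m ∈ Imu K r n q M ζ χ →
      (∀ j : Fin n, χ j = χ ⟨p, hp⟩ → p ≤ j.1) → PL (Xrec K r n q p hp) L • m = 0 := by
  have main : ∀ (N : ℕ) (χ : Fin n → Fin r) (p : ℕ) (hp : p < n) (m : M), meas χ = N →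
      m ∈ Imu K r n q M ζ χ → (∀ j : Fin n, χ j = χ ⟨p, hp⟩ → p ≤ j.1) →
      PL (Xrec K r n q p hp) L • m = 0 := by
    intro N
    induction N using Nat.strong_induction_on with
    | _ N IHN =>
      intro χ p hp m hN hm hmin
      by_cases hadj : ∀ (i : ℕ) (hi : i + 1 < n), χ ⟨i, by omega⟩ ≤ χ ⟨i + 1, hi⟩
      · exact hmono χ (monotone_of_adj χ hadj) ⟨p, hp⟩
          (fun j hj => hmin j hj) m hm
      · push_neg at hadj
        obtain ⟨i, hi, hdesc⟩ := hadj
        have hdescv : (χ ⟨i + 1, hi⟩ : ℕ) < (χ ⟨i, by omega⟩ : ℕ) := hdesc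
        have hnei : χ ⟨i, by omega⟩ ≠ χ ⟨i + 1, hi⟩ := by
          intro h; rw [h] at hdesc; exact lt_irrefl _ hdesc
        have hmeas : meas (χ ∘ swapi n i hi) < N := hN ▸ meas_swap_lt i hi χ hdescv
        have hm' : g K r n q i hi • m ∈ Imu K r n q M ζ (χ ∘ swapi n i hi) :=
          g_smul_Imu hm i hi
        have hnei' : (χ ∘ swapi n i hi) ⟨i, by omega⟩ ≠ (χ ∘ swapi n i hi) ⟨i + 1, hi⟩ := by
          simp only [Function.comp_apply, swapi_left, swapi_right]
          exact hnei.symm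
        by_cases hpi : p = i
        · -- p = i : move to p' = i + 1
          subst hpi
          have hmin' : ∀ j : Fin n, (χ ∘ swapi n p hi) j = (χ ∘ swapi n p hi) ⟨p + 1, hi⟩
              → p + 1 ≤ j.1 := by
            intro j hj
            rw [Function.comp_apply, Function.comp_apply, swapi_right] at hj
            by_cases h1 : j.1 = p
            · exfalso
              have hjp : j = (⟨p, by omega⟩ : Fin n) := Fin.ext h1
              rw [hjp, swapi_left] at hj
              exact hnei hj.symm
            by_cases h2 : j.1 = p + 1
            · omega
            · rw [swapi_other p hi j h1 h2] at hj
              have := hmin j hj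
              omega
          have hIH : PL (Xrec K r n q (p + 1) hi) L • (g K r n q p hi • m) = 0 :=
            IHN _ hmeas (χ ∘ swapi n p hi) (p + 1) hi _ rfl hm' hmin'
          rw [PL_conj hζ p hi hnei' L hm'] at hIH
          rw [g_invol hζ p hi hm hnei] at hIH
          exact g_smul_cancel p hi hIH
        · by_cases hpi1 : p = i + 1
          · -- p = i + 1 : move to p' = i
            subst hpi1
            have hmin' : ∀ j : Fin n, (χ ∘ swapi n i hi) j = (χ ∘ swapi n i hi) ⟨i, by omega⟩
                → i ≤ j.1 := by
              intro j hj
              rw [Function.comp_apply, Function.comp_apply, swapi_left] at hj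
              by_cases h1 : j.1 = i
              · omega
              by_cases h2 : j.1 = i + 1
              · omega
              · rw [swapi_other i hi j h1 h2] at hj
                have := hmin j hj
                omega
            have hIH : PL (Xrec K r n q i (by omega)) L • (g K r n q i hi • m) = 0 :=
              IHN _ hmeas (χ ∘ swapi n i hi) i (by omega) _ rfl hm' hmin'
            rw [PL_conj hζ i hi hnei L hm, hIH, smul_zero]
          · -- p ∉ {i, i+1}
            have hmin' : ∀ j : Fin n, (χ ∘ swapi n i hi) j = (χ ∘ swapi n i hi) ⟨p, hp⟩
                → p ≤ j.1 := by
              have hpfix : (χ ∘ swapi n i hi) ⟨p, hp⟩ = χ ⟨p, hp⟩ := by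
                rw [Function.comp_apply, swapi_other i hi _ hpi hpi1]
              intro j hj
              rw [hpfix, Function.comp_apply] at hj
              by_cases h1 : j.1 = i
              · have hjj : j = (⟨i, by omega⟩ : Fin n) := Fin.ext h1
                rw [hjj, swapi_left] at hj
                have := hmin ⟨i + 1, hi⟩ hj
                simp at this
                omega
              by_cases h2 : j.1 = i + 1
              · have hjj : j = (⟨i + 1, hi⟩ : Fin n) := Fin.ext h2
                rw [hjj, swapi_right] at hj
                have := hmin ⟨i, by omega⟩ hj
                simp at this
                omega
              · rw [swapi_other i hi j h1 h2] at hj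
                exact hmin j hj
            have hIH : PL (Xrec K r n q p hp) L • (g K r n q i hi • m) = 0 :=
              IHN _ hmeas (χ ∘ swapi n i hi) p hp _ rfl hm' hmin'
            rw [← mul_smul, ← g_mul_PL i hi p hp hpi hpi1 L, mul_smul] at hIH
            exact g_smul_cancel i hi hIH
  intro p hp χ m hm hmin
  exact main (meas χ) χ p hp m rfl hm hmin

end S19Gen

/-! ### Projections onto isotypic components, and killing all of `M` -/

section S19Proj

variable {K : Type} [Field K] {r n : ℕ} {q : K} {ζ : K}

/-- The projection `(1/r) ∑_s ζ^{-as} t_j^s` onto the `ζ^a`-eigenspace of `t_j`. -/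
def proj (r' : ℕ) (ζ : K) (j : Fin n) (a : ℕ) : Y K r' n q :=
  (r' : K)⁻¹ • ∑ s ∈ Finset.range r', (((ζ ^ a)⁻¹) ^ s) • t K r' n q j ^ s

lemma sum_proj (hζ : IsPrimitiveRoot ζ r) (hr : 0 < r) (hrK : (r : K) ≠ 0) (j : Fin n) :
    ∑ a ∈ Finset.range r, proj (q := q) r ζ j a = 1 := by
  unfold proj
  rw [← Finset.smul_sum, Finset.sum_comm]
  have hswap : ∀ a s : ℕ, ((ζ ^ a)⁻¹) ^ s = ((ζ ^ s)⁻¹) ^ a := by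
    intro a s
    rw [inv_pow, inv_pow, ← pow_mul, ← pow_mul, mul_comm]
  have hinner : ∀ s ∈ Finset.range r,
      ∑ a ∈ Finset.range r, (((ζ ^ a)⁻¹) ^ s) • t K r n q j ^ s
        = (∑ a ∈ Finset.range r, ((ζ ^ s)⁻¹) ^ a) • t K r n q j ^ s := by
    intro s _
    rw [← Finset.sum_smul]
    congr 1
    exact Finset.sum_congr rfl fun a _ => by rw [hswap]
  rw [Finset.sum_congr rfl hinner]
  rw [Finset.sum_eq_single_of_mem 0 (Finset.mem_range.mpr hr) ?side]
  case side =>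
    intro s hs hs0
    have hslt : s < r := Finset.mem_range.mp hs
    have hne1 : ((ζ ^ s)⁻¹ : K) ≠ 1 := by
      rw [ne_eq, inv_eq_one]
      exact hζ.pow_ne_one_of_pos_of_lt (by omega) hslt
    have hur : (((ζ ^ s)⁻¹ : K)) ^ r = 1 := by
      rw [inv_pow, ← pow_mul, mul_comm, pow_mul, hζ.pow_eq_one, one_pow, inv_one]
    rw [geom_sum_eq hne1, hur, sub_self, zero_div, zero_smul]
  · simp only [pow_zero, inv_one, one_pow, Finset.sum_const, Finset.card_range,
      nsmul_eq_mul, mul_one]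
    rw [smul_smul, inv_mul_cancel₀ hrK, one_smul]

lemma t_pow_one_mul (k j : Fin n) (s : ℕ) :
    t K r n q k * t K r n q j ^ s = t K r n q j ^ s * t K r n q k := by
  have := t_pow_mul_t_pow (r := r) (q := q) k j 1 s
  rwa [pow_one] at this

lemma t_mul_proj_comm (k j : Fin n) (a : ℕ) :
    t K r n q k * proj (q := q) r ζ j a = proj (q := q) r ζ j a * t K r n q k := by
  unfold proj
  rw [mul_smul_comm, smul_mul_assoc]
  congr 1
  rw [Finset.mul_sum, Finset.sum_mul]
  refine Finset.sum_congr rfl fun s _ => ?_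
  rw [mul_smul_comm, smul_mul_assoc, t_pow_one_mul]

lemma t_mul_proj_aux (R : ℕ) (hζ : IsPrimitiveRoot ζ (R + 1)) (j : Fin n) (a : ℕ) :
    t K (R + 1) n q j * proj (q := q) (R + 1) ζ j a
      = (ζ ^ a) • proj (q := q) (R + 1) ζ j a := by
  have hζ0 : ζ ≠ 0 := hζ.ne_zero (by omega)
  have hζa0 : (ζ : K) ^ a ≠ 0 := pow_ne_zero _ hζ0
  have hζar : ((ζ : K) ^ a) ^ (R + 1) = 1 := by
    rw [← pow_mul, mul_comm, pow_mul, hζ.pow_eq_one, one_pow]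
  unfold proj
  rw [mul_smul_comm, smul_comm]
  congr 1
  rw [Finset.mul_sum]
  have hlhs : ∀ s ∈ Finset.range (R + 1),
      t K (R + 1) n q j * ((((ζ ^ a)⁻¹) ^ s) • t K (R + 1) n q j ^ s)
        = (((ζ ^ a)⁻¹) ^ s) • t K (R + 1) n q j ^ (s + 1) := by
    intro s _
    rw [mul_smul_comm, ← pow_succ']
  rw [Finset.sum_congr rfl hlhs, Finset.sum_range_succ, Finset.smul_sum]
  have hrhs : ∑ s ∈ Finset.range (R + 1),
      (ζ ^ a) • ((((ζ ^ a)⁻¹) ^ s) • t K (R + 1) n q j ^ s)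
      = (∑ s ∈ Finset.range R,
            (ζ ^ a) • ((((ζ ^ a)⁻¹) ^ (s + 1)) • t K (R + 1) n q j ^ (s + 1)))
        + (ζ ^ a) • ((((ζ ^ a)⁻¹) ^ 0) • t K (R + 1) n q j ^ 0) :=
    Finset.sum_range_succ' _ R
  rw [hrhs]
  congr 1
  · refine Finset.sum_congr rfl fun s _ => ?_
    rw [smul_smul, pow_succ' ((ζ ^ a)⁻¹) s, mul_inv_cancel_left₀ hζa0]
  · rw [t_pow_r]
    have hc : (((ζ ^ a)⁻¹ : K)) ^ R = ζ ^ a := by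
      have h1 : ((ζ : K) ^ a) ^ R * (ζ ^ a) = 1 := by rw [← pow_succ, hζar]
      have h2 : ((ζ : K) ^ a) ^ R = ((ζ : K) ^ a)⁻¹ := eq_inv_of_mul_eq_one_left h1
      rw [inv_pow, h2, inv_inv]
    rw [hc]
    simp

lemma t_mul_proj (hζ : IsPrimitiveRoot ζ r) (hr : 0 < r) (j : Fin n) (a : ℕ) :
    t K r n q j * proj (q := q) r ζ j a = (ζ ^ a) • proj (q := q) r ζ j a := by
  obtain ⟨R, rfl⟩ : ∃ R, r = R + 1 := ⟨r - 1, by omega⟩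
  exact t_mul_proj_aux R hζ j a

end S19Proj

section S19Kill

variable {K : Type} [Field K] {r n : ℕ} {q : K} {ζ : K}
variable {M : Type} [AddCommGroup M] [Module K M] [Module (Y K r n q) M]
  [IsScalarTower K (Y K r n q) M]

/-- If `f(X_1)` kills every isotypic component, it kills all of `M`. -/
lemma X1_kill (hζ : IsPrimitiveRoot ζ r) (hr : 0 < r) (hrK : (r : K) ≠ 0) (L : List K)
    (hGEN : ∀ (χ : Fin n → Fin r) (m : M), m ∈ Imu K r n q M ζ χ →
      PL (X1 K r n q) L • m = 0) :
    ∀ m : M, PL (X1 K r n q) L • m = 0 := by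
  have main : ∀ (d : ℕ) (χ : Fin n → Fin r) (m : M),
      (∀ k : Fin n, k.1 + d < n → t K r n q k • m = (ζ ^ ((χ k : ℕ))) • m) →
      PL (X1 K r n q) L • m = 0 := by
    intro d
    induction d with
    | zero =>
      intro χ m h
      exact hGEN χ m (fun j => h j (by omega))
    | succ d ih =>
      intro χ m h
      by_cases hdn : d < n
      · set j : Fin n := ⟨n - d - 1, by omega⟩ with hj
        have hm1 : m = ∑ a ∈ Finset.range r, proj (q := q) r ζ j a • m := by
          rw [← Finset.sum_smul, sum_proj hζ hr hrK, one_smul]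
        rw [hm1, Finset.smul_sum]
        refine Finset.sum_eq_zero fun a ha => ?_
        have halt : a < r := Finset.mem_range.mp ha
        refine ih (Function.update χ j ⟨a, halt⟩) (proj (q := q) r ζ j a • m) ?_
        intro k hk
        by_cases hkj : k = j
        · subst hkj
          rw [← mul_smul, t_mul_proj hζ hr, Function.update_self, smul_assoc]
        · have hkj' : k.1 ≠ j.1 := fun hc => hkj (Fin.ext hc)
          have hkd : k.1 + (d + 1) < n := by
            have : k.1 ≠ n - d - 1 := hkj'
            omega
          rw [← mul_smul, t_mul_proj_comm, mul_smul, h k hkd, ksmul_comm,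
            Function.update_of_ne hkj]
      · refine ih χ m fun k hk => absurd hk (by omega)
  intro m
  exact main n (fun _ => ⟨0, hr⟩) m (fun k hk => absurd hk (by omega))

end S19Kill







section S19F

variable {K : Type} [Field K] {r n : ℕ} {q : K}

lemma F_eq_PL (x : Y K r n q) (lam : ℤ →₀ ℕ) :
    ((lam.support.sort (· ≤ ·)).map
      (fun i => (x - algebraMap K (Y K r n q) (q ^ i)) ^ lam i)).prod
      = PL x ((lam.support.sort (· ≤ ·)).flatMap
          (fun i => List.replicate (lam i) (q ^ i))) := by
  generalize lam.support.sort (· ≤ ·) = l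
  induction l with
  | nil => simp [PL]
  | cons a l ih =>
    rw [List.map_cons, List.prod_cons, ih, List.flatMap_cons]
    have happ : PL x (List.replicate (lam a) (q ^ a)
          ++ l.flatMap fun i => List.replicate (lam i) (q ^ i))
        = PL x (List.replicate (lam a) (q ^ a))
          * PL x (l.flatMap fun i => List.replicate (lam i) (q ^ i)) := by
      simp [PL, List.map_append, List.prod_append]
    rw [happ]
    congr 1
    simp [PL, List.map_replicate, List.prod_replicate]

end S19F

end YH


/-- Theorem 5.5 of the paper, cyclotomic Morita equivalence:
a finite-dimensional `Ŷ_{r,n}^K`-module `M` is annihilated by the two-sided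
ideal `J_λ = ⟨f_λ⟩`, `f_λ = ∏_i (X_1 - qⁱ)^{λ_i}` (i.e. `M` is a module over the
cyclotomic quotient `Y_{r,n}^{λ,K}`) if and only if, for every `μ ∈ C_r(n)`
(monotone block function `c`), the `Ĥ_{μ_1}^K ⊗ ⋯ ⊗ Ĥ_{μ_r}^K`-module
`Hom_{KT}(V(μ), I_μM)` (identified with `I_μM`, on which `Y_k` acts as `X_k`)
is annihilated by the cyclotomic relations `∏_i (Y_{b̄_{k-1}+1} - qⁱ)^{λ_i}` at
the first position `fp` of each block `k`, i.e. is a module over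
`H_{μ_1}^{λ,K} ⊗ ⋯ ⊗ H_{μ_r}^{λ,K}`.  (Hence the category equivalence `F`
restricts to an equivalence `Y_{r,n}^{λ,K}`-mod `≃` `H_{r,n}^{λ,K}`-mod.) -/
theorem statement19 (K : Type) [Field K] [IsAlgClosed K] (r n : ℕ) (hr : 0 < r) (hn : 0 < n)
    (hrK : (r : K) ≠ 0) (q : K) (hq : q ≠ 0)
    (ζ : K) (hζ : IsPrimitiveRoot ζ r)
    (lam : ℤ →₀ ℕ)
    (M : Type) [AddCommGroup M] [Module K M] [Module (YH.Y K r n q) M]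
    [IsScalarTower K (YH.Y K r n q) M] [FiniteDimensional K M] :
    (∀ y ∈ TwoSidedIdeal.span
        {((lam.support.sort (· ≤ ·)).map
          (fun i => (YH.X1 K r n q - algebraMap K (YH.Y K r n q) (q ^ i)) ^ lam i)).prod},
        ∀ m : M, y • m = 0) ↔
    (∀ (c : Fin n → Fin r), Monotone c →
      ∀ (k : Fin r) (fp : Fin n), c fp = k → (∀ j : Fin n, c j = k → fp ≤ j) →
        ∀ m ∈ YH.Imu K r n q M ζ c,
          (((lam.support.sort (· ≤ ·)).map
            (fun i => (YH.X K r n q fp - algebraMap K (YH.Y K r n q) (q ^ i)) ^ lam i)).prod)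
            • m = 0) := by
  classical
  set Lfl : List K := ((lam.support.sort (· ≤ ·)).flatMap
      (fun i => List.replicate (lam i) (q ^ i))) with hLfl
  have hF : ∀ x : YH.Y K r n q,
      ((lam.support.sort (· ≤ ·)).map
        (fun i => (x - algebraMap K (YH.Y K r n q) (q ^ i)) ^ lam i)).prod
        = YH.PL x Lfl := fun x => YH.F_eq_PL x lam
  constructor
  · intro hL c hc k fp hcfp hmin m hm
    have h0 : ∀ m' : M, YH.PL (YH.X1 K r n q) Lfl • m' = 0 := by
      intro m'
      have := hL _ (TwoSidedIdeal.subset_span (Set.mem_singleton _)) m'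
      rwa [hF (YH.X1 K r n q)] at this
    have hmin' : ∀ j : Fin n, c j = c ⟨fp.1, fp.2⟩ → fp.1 ≤ j.1 := by
      intro j hj
      have hck : c j = k := by rw [← hcfp]; exact hj
      exact hmin j hck
    have hres := YH.gen_of_X1 hζ Lfl h0 fp.1 fp.2 c m hm hmin'
    rw [hF (YH.X K r n q fp)]
    exact hres
  · intro hR y hy m
    have hmono : ∀ (c : Fin n → Fin r), Monotone c → ∀ (p : Fin n),
        (∀ j : Fin n, c j = c p → p ≤ j) →
        ∀ m' ∈ YH.Imu K r n q M ζ c, YH.PL (YH.Xrec K r n q p.1 p.2) Lfl • m' = 0 := by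
      intro c hc p hminp m' hm'
      have := hR c hc (c p) p rfl hminp m' hm'
      rwa [hF (YH.X K r n q p)] at this
    have hGEN := YH.gen_of_mono hζ Lfl hmono
    have h0 : ∀ m' : M, YH.PL (YH.X1 K r n q) Lfl • m' = 0 :=
      YH.X1_kill hζ hr hrK Lfl (fun χ m' hm' =>
        hGEN 0 hn χ m' hm' (fun j _ => Nat.zero_le _))
    let I : TwoSidedIdeal (YH.Y K r n q) := TwoSidedIdeal.mk'
      {z : YH.Y K r n q | ∀ m' : M, z • m' = 0}
      (fun m' => zero_smul _ m')
      (fun hx hy' m' => by rw [add_smul, hx m', hy' m', add_zero])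
      (fun hx m' => by rw [neg_smul, hx m', neg_zero])
      (fun hy' m' => by rw [mul_smul, hy' m', smul_zero])
      (fun {x' y'} hx m' => by rw [mul_smul, hx (y' • m')])
    have hyI : y ∈ I := by
      refine TwoSidedIdeal.mem_span_iff.mp hy I ?_
      intro z hz
      rw [Set.mem_singleton_iff] at hz
      subst hz
      refine (TwoSidedIdeal.mem_mk' _ _ _ _ _ _ _).mpr ?_
      intro m'
      rw [hF (YH.X1 K r n q)]
      exact h0 m'
    exact (TwoSidedIdeal.mem_mk' _ _ _ _ _ _ y).mp hyI m
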